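/- Let φ : [0,1] → [0,1] be Lipschitz with constant L_φ ≥ 1, let K be the Koopman operator Kf = f∘φ, and B_n the Bernstein operator. Then for every f ∈ C([0,1]), n ≥ 1, k ≥ 1, and δ = 1/√n: ∑_{j=0}^{k−1} ω_{(B_n K)^j f}(L_φ δ) ≤ ∑_{l=1}^{k} 4^{k−l} ω_f(L_φ^l δ). -/

import Mathlib

noncomputable def bern (n k : ℕ) (x : ℝ) : ℝ :=
  (n.choose k : ℝ) * x ^ k * (1 - x) ^ (n - k)

noncomputable def bernOp (n : ℕ) (f : ℝ → ℝ) (x : ℝ) : ℝ :=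
  ∑ k ∈ Finset.range (n + 1), f ((k : ℝ) / (n : ℝ)) * bern n k x

noncomputable def modCont (f : ℝ → ℝ) (δ : ℝ) : ℝ :=
  sSup {r : ℝ | ∃ x ∈ Set.Icc (0 : ℝ) 1, ∃ y ∈ Set.Icc (0 : ℝ) 1, |x - y| ≤ δ ∧ r = |f x - f y|}

lemma bern_sum (n : ℕ) (x : ℝ) : ∑ k ∈ Finset.range (n + 1), bern n k x = 1 := by
  have h := add_pow x (1 - x) n
  simp only [add_sub_cancel, one_pow] at h
  refine Eq.trans (Finset.sum_congr rfl ?_) h.symm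
  intro k _
  simp [bern]; ring

lemma bern_nonneg {n k : ℕ} {x : ℝ} (hx : x ∈ Set.Icc (0 : ℝ) 1) : 0 ≤ bern n k x := by
  obtain ⟨h0, h1⟩ := hx
  have : (0:ℝ) ≤ 1 - x := by linarith
  unfold bern; positivity

lemma div_mem_I {n : ℕ} (hn : 1 ≤ n) {k : ℕ} (hk : k ∈ Finset.range (n + 1)) :
    ((k : ℝ) / n) ∈ Set.Icc (0:ℝ) 1 := by
  have hnpos : 0 < (n : ℝ) := by exact_mod_cast hn
  have hk' : (k : ℝ) ≤ n := by
    exact_mod_cast Nat.lt_succ_iff.mp (Finset.mem_range.mp hk)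
  constructor
  · positivity
  · rw [div_le_one hnpos]; exact hk'

lemma bern_variance (n : ℕ) (hn : 1 ≤ n) {x : ℝ} (hx : x ∈ Set.Icc (0 : ℝ) 1) :
    ∑ k ∈ Finset.range (n + 1), (x - (k : ℝ) / n) ^ 2 * bern n k x = x * (1 - x) / n := by
  have hpos : 0 < (n : ℝ) := by exact_mod_cast hn
  have h := bernstein.variance (n := n) (by omega) ⟨x, hx⟩
  rw [← Fin.sum_univ_eq_sum_range, ← h]
  apply Finset.sum_congr rfl
  intro k _
  simp [bern, bernstein.z, bernstein_apply]

lemma modCont_nonneg (f : ℝ → ℝ) (δ : ℝ) : 0 ≤ modCont f δ := by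
  apply Real.sSup_nonneg
  rintro r ⟨x, hx, y, hy, hxy, rfl⟩
  positivity

lemma modCont_le {f : ℝ → ℝ} {δ C : ℝ} (hC : 0 ≤ C)
    (h : ∀ x ∈ Set.Icc (0:ℝ) 1, ∀ y ∈ Set.Icc (0:ℝ) 1, |x - y| ≤ δ → |f x - f y| ≤ C) :
    modCont f δ ≤ C := by
  apply Real.sSup_le _ hC
  rintro r ⟨x, hx, y, hy, hxy, rfl⟩
  exact h x hx y hy hxy

lemma abs_sub_le_modCont {f : ℝ → ℝ} {M : ℝ} (hM : ∀ x ∈ Set.Icc (0:ℝ) 1, |f x| ≤ M)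
    {δ x y : ℝ} (hx : x ∈ Set.Icc (0:ℝ) 1) (hy : y ∈ Set.Icc (0:ℝ) 1)
    (hxy : |x - y| ≤ δ) : |f x - f y| ≤ modCont f δ := by
  apply le_csSup
  · refine ⟨2 * M, ?_⟩
    rintro r ⟨a, ha, b, hb, hab, rfl⟩
    calc |f a - f b| ≤ |f a| + |f b| := abs_sub _ _
      _ ≤ M + M := add_le_add (hM a ha) (hM b hb)
      _ = 2 * M := by ring
  · exact ⟨x, hx, y, hy, hxy, rfl⟩

lemma modCont_mono {f : ℝ → ℝ} {M : ℝ} (hM : ∀ x ∈ Set.Icc (0:ℝ) 1, |f x| ≤ M)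
    {δ δ' : ℝ} (h : δ ≤ δ') : modCont f δ ≤ modCont f δ' := by
  apply modCont_le (modCont_nonneg f δ')
  intro x hx y hy hxy
  exact abs_sub_le_modCont hM hx hy (hxy.trans h)

lemma steps {f : ℝ → ℝ} {M : ℝ} (hM : ∀ x ∈ Set.Icc (0:ℝ) 1, |f x| ≤ M)
    {δ : ℝ} (hδ : 0 ≤ δ) :
    ∀ N : ℕ, ∀ u ∈ Set.Icc (0:ℝ) 1, ∀ v ∈ Set.Icc (0:ℝ) 1, u ≤ v → v - u ≤ N * δ →
      |f u - f v| ≤ N * modCont f δ := by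
  intro N
  induction N with
  | zero =>
    intro u hu v hv huv h
    have h' : v ≤ u := by push_cast at h; linarith
    have : u = v := le_antisymm huv h'
    simp [this]
  | succ N ih =>
    intro u hu v hv huv h
    set w := max u (v - δ) with hw
    have hw1 : u ≤ w := le_max_left _ _
    have hw2 : w ≤ v := max_le huv (by linarith)
    have hwI : w ∈ Set.Icc (0:ℝ) 1 := ⟨le_trans hu.1 hw1, le_trans hw2 hv.2⟩
    have h1 : |f u - f w| ≤ N * modCont f δ := by
      apply ih u hu w hwI hw1
      rcases le_total (v - δ) u with hc | hc
      · have hwu : w = u := max_eq_left hc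
        rw [hwu]; simp; positivity
      · have hwv : w = v - δ := max_eq_right hc
        rw [hwv]; push_cast at h ⊢; linarith
    have h2 : |f w - f v| ≤ modCont f δ := by
      apply abs_sub_le_modCont hM hwI hv
      rw [abs_le]
      constructor <;> [linarith [le_max_right u (v - δ)]; linarith]
    calc |f u - f v| ≤ |f u - f w| + |f w - f v| := abs_sub_le _ _ _
      _ ≤ N * modCont f δ + modCont f δ := add_le_add h1 h2
      _ = (N + 1 : ℕ) * modCont f δ := by push_cast; ring

lemma quad_bound {f : ℝ → ℝ} {M : ℝ} (hM : ∀ x ∈ Set.Icc (0:ℝ) 1, |f x| ≤ M)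
    {δ : ℝ} (hδ : 0 < δ) {u v : ℝ} (hu : u ∈ Set.Icc (0:ℝ) 1) (hv : v ∈ Set.Icc (0:ℝ) 1) :
    |f u - f v| ≤ (1 + (u - v) ^ 2 / δ ^ 2) * modCont f δ := by
  have key : ∀ a ∈ Set.Icc (0:ℝ) 1, ∀ b ∈ Set.Icc (0:ℝ) 1, a ≤ b →
      |f a - f b| ≤ (1 + (a - b) ^ 2 / δ ^ 2) * modCont f δ := by
    intro a ha b hb hab
    set q : ℝ := (b - a) / δ with hq
    have hq0 : 0 ≤ q := div_nonneg (by linarith) hδ.le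
    set N : ℕ := ⌈q⌉₊ with hN
    have h1 : b - a ≤ N * δ := by
      have hle := Nat.le_ceil q
      calc b - a = q * δ := by rw [hq]; field_simp
        _ ≤ N * δ := mul_le_mul_of_nonneg_right (by exact_mod_cast hle) hδ.le
    have h2 : |f a - f b| ≤ N * modCont f δ := steps hM hδ.le N a ha b hb hab h1
    have h3 : (N : ℝ) ≤ 1 + q ^ 2 := by
      rcases le_total q 1 with hc | hc
      · have hN1 : N ≤ 1 := by
          rw [hN]; apply Nat.ceil_le.mpr; exact_mod_cast hc
        have : (N : ℝ) ≤ 1 := by exact_mod_cast hN1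
        nlinarith
      · have hlt := Nat.ceil_lt_add_one hq0
        have hqq : q ≤ q ^ 2 := by nlinarith
        rw [hN]; nlinarith [Nat.le_ceil q, hlt]
    have h4 : (1 : ℝ) + q ^ 2 = 1 + (a - b) ^ 2 / δ ^ 2 := by
      rw [hq, div_pow]; ring_nf
    calc |f a - f b| ≤ N * modCont f δ := h2
      _ ≤ (1 + q ^ 2) * modCont f δ :=
          mul_le_mul_of_nonneg_right h3 (modCont_nonneg f δ)
      _ = (1 + (a - b) ^ 2 / δ ^ 2) * modCont f δ := by rw [h4]
  rcases le_total u v with hc | hc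
  · exact key u hu v hv hc
  · have h5 := key v hv u hu hc
    rw [abs_sub_comm] at h5
    have h6 : (v - u) ^ 2 = (u - v) ^ 2 := by ring
    rwa [h6] at h5

lemma bern_approx {f : ℝ → ℝ} {M : ℝ} (hM : ∀ x ∈ Set.Icc (0:ℝ) 1, |f x| ≤ M)
    {n : ℕ} (hn : 1 ≤ n) {x : ℝ} (hx : x ∈ Set.Icc (0:ℝ) 1) :
    |bernOp n f x - f x| ≤ (5 / 4) * modCont f (1 / Real.sqrt n) := by
  have hnpos : 0 < (n : ℝ) := by exact_mod_cast hn
  have hsq : 0 < Real.sqrt n := Real.sqrt_pos.mpr hnpos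
  set δ : ℝ := 1 / Real.sqrt n with hδ
  have hδpos : 0 < δ := by positivity
  have hδ2 : δ ^ 2 = 1 / n := by
    rw [hδ, div_pow, one_pow, Real.sq_sqrt hnpos.le]
  set ω : ℝ := modCont f δ with hω
  have hω0 : 0 ≤ ω := modCont_nonneg f δ
  have expand : bernOp n f x - f x
      = ∑ k ∈ Finset.range (n + 1), (f ((k : ℝ) / n) - f x) * bern n k x := by
    rw [bernOp]
    have h1 : f x = ∑ k ∈ Finset.range (n + 1), f x * bern n k x := by
      rw [← Finset.mul_sum, bern_sum, mul_one]
    calc (∑ k ∈ Finset.range (n + 1), f ((k : ℝ) / n) * bern n k x) - f x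
        = ∑ k ∈ Finset.range (n + 1),
            (f ((k : ℝ) / n) * bern n k x - f x * bern n k x) := by
          rw [Finset.sum_sub_distrib, ← h1]
      _ = ∑ k ∈ Finset.range (n + 1), (f ((k : ℝ) / n) - f x) * bern n k x := by
          apply Finset.sum_congr rfl; intros; ring
  obtain ⟨hx0, hx1⟩ := hx
  have hx' : x ∈ Set.Icc (0:ℝ) 1 := ⟨hx0, hx1⟩
  have hxx : x * (1 - x) ≤ 1 / 4 := by nlinarith [sq_nonneg (x - 1/2)]
  calc |bernOp n f x - f x|
      = |∑ k ∈ Finset.range (n + 1), (f ((k : ℝ) / n) - f x) * bern n k x| := by rw [expand]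
    _ ≤ ∑ k ∈ Finset.range (n + 1), |(f ((k : ℝ) / n) - f x) * bern n k x| :=
        Finset.abs_sum_le_sum_abs _ _
    _ ≤ ∑ k ∈ Finset.range (n + 1),
          (ω * bern n k x + (ω / δ ^ 2) * ((x - (k : ℝ) / n) ^ 2 * bern n k x)) := by
        apply Finset.sum_le_sum
        intro k hk
        rw [abs_mul, abs_of_nonneg (bern_nonneg hx')]
        have hq := quad_bound hM hδpos (div_mem_I hn hk) hx'
        have h7 : ((k : ℝ) / n - x) ^ 2 = (x - (k : ℝ) / n) ^ 2 := by ring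
        rw [h7] at hq
        calc |f ((k : ℝ) / n) - f x| * bern n k x
            ≤ ((1 + (x - (k : ℝ) / n) ^ 2 / δ ^ 2) * ω) * bern n k x :=
              mul_le_mul_of_nonneg_right hq (bern_nonneg hx')
          _ = ω * bern n k x + (ω / δ ^ 2) * ((x - (k : ℝ) / n) ^ 2 * bern n k x) := by ring
    _ = ω * 1 + (ω / δ ^ 2) * (x * (1 - x) / n) := by
        rw [Finset.sum_add_distrib, ← Finset.mul_sum, ← Finset.mul_sum, bern_sum,
          bern_variance n hn hx']
    _ ≤ (5 / 4) * ω := by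
        have h8 : (ω / δ ^ 2) * (x * (1 - x) / n) = ω * (x * (1 - x)) := by
          rw [hδ2]; field_simp
        rw [h8]; nlinarith

lemma bernOp_bound {h : ℝ → ℝ} {M : ℝ} {n : ℕ} (hn : 1 ≤ n)
    (hM : ∀ x ∈ Set.Icc (0:ℝ) 1, |h x| ≤ M) :
    ∀ x ∈ Set.Icc (0:ℝ) 1, |bernOp n h x| ≤ M := by
  intro x hx
  calc |bernOp n h x| ≤ ∑ k ∈ Finset.range (n + 1), |h ((k : ℝ) / n) * bern n k x| :=
        Finset.abs_sum_le_sum_abs _ _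
    _ ≤ ∑ k ∈ Finset.range (n + 1), M * bern n k x := by
        apply Finset.sum_le_sum
        intro k hk
        rw [abs_mul, abs_of_nonneg (bern_nonneg hx)]
        exact mul_le_mul_of_nonneg_right (hM _ (div_mem_I hn hk)) (bern_nonneg hx)
    _ = M := by rw [← Finset.mul_sum, bern_sum, mul_one]

lemma modCont_bernOp {h : ℝ → ℝ} {M : ℝ} (hM : ∀ x ∈ Set.Icc (0:ℝ) 1, |h x| ≤ M)
    {n : ℕ} (hn : 1 ≤ n) {t : ℝ} (ht : 1 / Real.sqrt n ≤ t) :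
    modCont (bernOp n h) t ≤ modCont h t + 3 * modCont h (1 / Real.sqrt n) := by
  have h1 := modCont_nonneg h t
  have h2 := modCont_nonneg h (1 / Real.sqrt n)
  apply modCont_le (by linarith)
  intro x hx y hy hxy
  have e1 := bern_approx hM hn hx
  have e2 := bern_approx hM hn hy
  have e3 : |h x - h y| ≤ modCont h t := abs_sub_le_modCont hM hx hy hxy
  calc |bernOp n h x - bernOp n h y|
      ≤ |bernOp n h x - h x| + |h x - bernOp n h y| := abs_sub_le _ _ _
    _ ≤ |bernOp n h x - h x| + (|h x - h y| + |h y - bernOp n h y|) :=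
        add_le_add_right (abs_sub_le _ _ _) _
    _ = |bernOp n h x - h x| + |h x - h y| + |bernOp n h y - h y| := by
        rw [abs_sub_comm (h y)]; ring
    _ ≤ (5/4) * modCont h (1 / Real.sqrt n) + modCont h t
        + (5/4) * modCont h (1 / Real.sqrt n) := by linarith
    _ ≤ modCont h t + 3 * modCont h (1 / Real.sqrt n) := by linarith

lemma modCont_comp {g : ℝ → ℝ} {M : ℝ} (hM : ∀ x ∈ Set.Icc (0:ℝ) 1, |g x| ≤ M)
    {φ : ℝ → ℝ} (hφmap : Set.MapsTo φ (Set.Icc (0 : ℝ) 1) (Set.Icc (0 : ℝ) 1))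
    {Lφ : ℝ} (hLφ0 : 0 ≤ Lφ)
    (hL : ∀ x ∈ Set.Icc (0 : ℝ) 1, ∀ y ∈ Set.Icc (0 : ℝ) 1, |φ x - φ y| ≤ Lφ * |x - y|)
    {t : ℝ} : modCont (g ∘ φ) t ≤ modCont g (Lφ * t) := by
  apply modCont_le (modCont_nonneg _ _)
  intro x hx y hy hxy
  exact abs_sub_le_modCont hM (hφmap hx) (hφmap hy)
    ((hL x hx y hy).trans (mul_le_mul_of_nonneg_left hxy hLφ0))

theorem stmt18 (φ : ℝ → ℝ)
    (hφmap : Set.MapsTo φ (Set.Icc (0 : ℝ) 1) (Set.Icc (0 : ℝ) 1))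
    (Lφ : ℝ) (hLφ1 : 1 ≤ Lφ)
    (hL : ∀ x ∈ Set.Icc (0 : ℝ) 1, ∀ y ∈ Set.Icc (0 : ℝ) 1,
      |φ x - φ y| ≤ Lφ * |x - y|)
    (f : ℝ → ℝ) (hf : ContinuousOn f (Set.Icc (0 : ℝ) 1))
    (n : ℕ) (hn : 1 ≤ n) (k : ℕ) (hk : 1 ≤ k)
    (δ : ℝ) (hδ : δ = 1 / Real.sqrt n) :
    ∑ j ∈ Finset.range k,
        modCont ((fun g : ℝ → ℝ => bernOp n (g ∘ φ))^[j] f) (Lφ * δ)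
      ≤ ∑ l ∈ Finset.Icc 1 k, (4 : ℝ) ^ (k - l) * modCont f (Lφ ^ l * δ) := by
  have hnpos : 0 < (n : ℝ) := by exact_mod_cast hn
  have hsq : 0 < Real.sqrt n := Real.sqrt_pos.mpr hnpos
  have hδpos : 0 < δ := by rw [hδ]; positivity
  have hLφ0 : (0:ℝ) ≤ Lφ := le_trans zero_le_one hLφ1
  obtain ⟨M, hM⟩ : ∃ M, ∀ x ∈ Set.Icc (0:ℝ) 1, |f x| ≤ M := by
    obtain ⟨C, hC⟩ := isCompact_Icc.exists_bound_of_continuousOn hf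
    exact ⟨C, fun x hx => by simpa [Real.norm_eq_abs] using hC x hx⟩
  set g : ℕ → ℝ → ℝ := fun j => (fun g : ℝ → ℝ => bernOp n (g ∘ φ))^[j] f with hg
  have hgsucc : ∀ j, g (j + 1) = bernOp n (g j ∘ φ) := by
    intro j
    rw [hg]
    simp only [Function.iterate_succ_apply']
  have hgM : ∀ j, ∀ x ∈ Set.Icc (0:ℝ) 1, |g j x| ≤ M := by
    intro j
    induction j with
    | zero => simpa [hg] using hM
    | succ j ih =>
      rw [hgsucc j]
      exact bernOp_bound hn (fun x hx => ih (φ x) (hφmap hx))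
  have hpow : ∀ m : ℕ, (1:ℝ) ≤ Lφ ^ m := fun m => one_le_pow₀ hLφ1
  have key : ∀ j m : ℕ, modCont (g j) (Lφ ^ (m + 1) * δ)
      ≤ modCont f (Lφ ^ (m + 1 + j) * δ)
        + 3 * ∑ i ∈ Finset.range j, modCont (g i) (Lφ * δ) := by
    intro j
    induction j with
    | zero =>
      intro m
      simp [hg]
    | succ j ih =>
      intro m
      have hδt : 1 / Real.sqrt n ≤ Lφ ^ (m + 1) * δ := by
        rw [← hδ]
        nlinarith [hpow (m + 1), hδpos]
      have step1 : modCont (g (j + 1)) (Lφ ^ (m + 1) * δ)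
          ≤ modCont (g j ∘ φ) (Lφ ^ (m + 1) * δ) + 3 * modCont (g j ∘ φ) δ := by
        rw [hgsucc j, hδ]
        rw [hδ] at hδt
        exact modCont_bernOp (fun x hx => hgM j (φ x) (hφmap hx)) hn hδt
      have step2 : modCont (g j ∘ φ) (Lφ ^ (m + 1) * δ)
          ≤ modCont (g j) (Lφ ^ (m + 2) * δ) := by
        have := modCont_comp (hgM j) hφmap hLφ0 hL (t := Lφ ^ (m + 1) * δ)
        have he : Lφ * (Lφ ^ (m + 1) * δ) = Lφ ^ (m + 2) * δ := by ring
        rwa [he] at this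
      have step3 : modCont (g j ∘ φ) δ ≤ modCont (g j) (Lφ * δ) :=
        modCont_comp (hgM j) hφmap hLφ0 hL (t := δ)
      have ihm := ih (m + 1)
      have hsum : ∑ i ∈ Finset.range (j + 1), modCont (g i) (Lφ * δ)
          = (∑ i ∈ Finset.range j, modCont (g i) (Lφ * δ)) + modCont (g j) (Lφ * δ) :=
        Finset.sum_range_succ _ _
      have he2 : m + 2 + j = m + 1 + (j + 1) := by omega
      rw [he2] at ihm
      rw [hsum]
      linarith
  have final : ∀ K : ℕ,
      ∑ j ∈ Finset.range K, modCont (g j) (Lφ * δ)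
        ≤ ∑ l ∈ Finset.Icc 1 K, (4 : ℝ) ^ (K - l) * modCont f (Lφ ^ l * δ) := by
    intro K
    induction K with
    | zero => simp
    | succ K ih =>
      rw [Finset.sum_range_succ]
      have haK := key K 0
      rw [pow_one] at haK
      have hT : ∑ l ∈ Finset.Icc 1 (K + 1), (4 : ℝ) ^ (K + 1 - l) * modCont f (Lφ ^ l * δ)
          = 4 * (∑ l ∈ Finset.Icc 1 K, (4 : ℝ) ^ (K - l) * modCont f (Lφ ^ l * δ))
            + modCont f (Lφ ^ (K + 1) * δ) := by
        rw [Finset.sum_Icc_succ_top (by omega : 1 ≤ K + 1), Finset.mul_sum]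
        congr 1
        · apply Finset.sum_congr rfl
          intro l hl
          have hlK : l ≤ K := (Finset.mem_Icc.mp hl).2
          have : K + 1 - l = (K - l) + 1 := by omega
          rw [this, pow_succ]
          ring
        · simp
      rw [hT]
      have h01 : (0:ℕ) + 1 + K = K + 1 := by omega
      rw [h01] at haK
      linarith
  exact final k
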